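/- Let K be the kernel of the multiplication map μ_a × μ_b × μ_c → μ_{lcm(a,b,c)}, (ξ₀,ξ₁,ξ_∞) ↦ ξ₀ξ₁ξ_∞, as groups of roots of unity in an algebraically closed field of characteristic coprime to abc. Then K is isomorphic to ℤ/dℤ × ℤ/(m/d)ℤ, where d = gcd(a,b,c) and m = gcd(bc,ac,ab). -/

import Mathlib

/-- The product homomorphism `G × G × G →* G`, `(x,y,z) ↦ xyz`. -/
def tripleProdHom (G : Type*) [CommGroup G] : G × G × G →* G :=
  MonoidHom.fst G (G × G) * (MonoidHom.fst G G).comp (MonoidHom.snd G (G × G)) *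
    (MonoidHom.snd G G).comp (MonoidHom.snd G (G × G))

/-- The group `μ_n` of `n`-th roots of unity in `kˣ`, as the kernel of `x ↦ xⁿ`. -/
def mu (k : Type*) [Field k] (n : ℕ) : Subgroup kˣ :=
  (powMonoidHom n : kˣ →* kˣ).ker

set_option linter.unusedSectionVars false

namespace KernelMu

variable {k : Type*} [Field k]

lemma mem_mu {n : ℕ} {x : kˣ} : x ∈ mu k n ↔ x ^ n = 1 := by
  simp [mu, MonoidHom.mem_ker, powMonoidHom_apply]

/-- The kernel subgroup. -/
abbrev K (k : Type*) [Field k] (a b c : ℕ) : Subgroup (kˣ × kˣ × kˣ) :=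
  ((mu k a).prod ((mu k b).prod (mu k c))) ⊓ (tripleProdHom kˣ).ker

lemma mem_K {a b c : ℕ} {g : kˣ × kˣ × kˣ} :
    g ∈ K k a b c ↔ g.1 ^ a = 1 ∧ g.2.1 ^ b = 1 ∧ g.2.2 ^ c = 1 ∧ g.1 * g.2.1 * g.2.2 = 1 := by
  simp [K, Subgroup.mem_prod, mem_mu, MonoidHom.mem_ker, tripleProdHom, and_assoc]

lemma mu_eq_rootsOfUnity (n : ℕ) : mu k n = rootsOfUnity n k := by
  ext x; simp [mem_mu, mem_rootsOfUnity]

/-- `μ_n ≅ ℤ/n` for `(n : k) ≠ 0`. -/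
lemma muEquiv [IsAlgClosed k] (n : ℕ) (hn : ((n : ℕ) : k) ≠ 0) :
    Nonempty ((mu k n) ≃* Multiplicative (ZMod n)) := by
  haveI : NeZero ((n : ℕ) : k) := ⟨hn⟩
  haveI : NeZero n := ⟨by rintro rfl; exact hn (by simp)⟩
  haveI := IsSepClosed.hasEnoughRootsOfUnity k n
  have hcard : Nat.card (rootsOfUnity n k) = Nat.card (Multiplicative (ZMod n)) := by
    rw [HasEnoughRootsOfUnity.natCard_rootsOfUnity k n, Nat.card_congr Multiplicative.toAdd,
      Nat.card_zmod]
  exact ⟨(MulEquiv.subgroupCongr (mu_eq_rootsOfUnity (k := k) n)).trans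
    (mulEquivOfCyclicCardEq hcard)⟩


section Swaps

variable [IsAlgClosed k]

/-- swap first two coordinates -/
def swap12 (a b c : ℕ) : (K k a b c) ≃* (K k b a c) where
  toFun g := ⟨(g.1.2.1, g.1.1, g.1.2.2), by
    obtain ⟨h1, h2, h3, h4⟩ := mem_K.mp g.2
    exact mem_K.mpr ⟨h2, h1, h3, by rw [show g.1.2.1 * g.1.1 * g.1.2.2 = g.1.1 * g.1.2.1 * g.1.2.2 by rw [mul_comm g.1.2.1 g.1.1]]; exact h4⟩⟩
  invFun g := ⟨(g.1.2.1, g.1.1, g.1.2.2), by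
    obtain ⟨h1, h2, h3, h4⟩ := mem_K.mp g.2
    exact mem_K.mpr ⟨h2, h1, h3, by rw [show g.1.2.1 * g.1.1 * g.1.2.2 = g.1.1 * g.1.2.1 * g.1.2.2 by rw [mul_comm g.1.2.1 g.1.1]]; exact h4⟩⟩
  left_inv g := by ext <;> rfl
  right_inv g := by ext <;> rfl
  map_mul' g h := by ext <;> rfl

/-- swap last two coordinates -/
def swap23 (a b c : ℕ) : (K k a b c) ≃* (K k a c b) where
  toFun g := ⟨(g.1.1, g.1.2.2, g.1.2.1), by
    obtain ⟨h1, h2, h3, h4⟩ := mem_K.mp g.2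
    exact mem_K.mpr ⟨h1, h3, h2, by rw [show g.1.1 * g.1.2.2 * g.1.2.1 = g.1.1 * g.1.2.1 * g.1.2.2 by rw [mul_right_comm]]; exact h4⟩⟩
  invFun g := ⟨(g.1.1, g.1.2.2, g.1.2.1), by
    obtain ⟨h1, h2, h3, h4⟩ := mem_K.mp g.2
    exact mem_K.mpr ⟨h1, h3, h2, by rw [show g.1.1 * g.1.2.2 * g.1.2.1 = g.1.1 * g.1.2.1 * g.1.2.2 by rw [mul_right_comm]]; exact h4⟩⟩
  left_inv g := by ext <;> rfl
  right_inv g := by ext <;> rfl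
  map_mul' g h := by ext <;> rfl

end Swaps

/-- When `a ∣ c` and `b ∣ c`, the kernel is `μ_a × μ_b`. -/
def dvdEquiv (a b c : ℕ) (hac : a ∣ c) (hbc : b ∣ c) :
    (K k a b c) ≃* (mu k a) × (mu k b) where
  toFun g := (⟨g.1.1, mem_mu.mpr (mem_K.mp g.2).1⟩, ⟨g.1.2.1, mem_mu.mpr (mem_K.mp g.2).2.1⟩)
  invFun uv := ⟨(uv.1.1, uv.2.1, (uv.1.1 * uv.2.1)⁻¹), by
    obtain ⟨u, hu⟩ := uv.1; obtain ⟨v, hv⟩ := uv.2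
    have hu' := mem_mu.mp hu; have hv' := mem_mu.mp hv
    have hcu : u ^ c = 1 := by obtain ⟨s, rfl⟩ := hac; rw [pow_mul, hu', one_pow]
    have hcv : v ^ c = 1 := by obtain ⟨t, rfl⟩ := hbc; rw [pow_mul, hv', one_pow]
    refine mem_K.mpr ⟨hu', hv', ?_, by group⟩
    simp only [inv_pow, mul_pow, hcu, hcv, mul_one, inv_one]⟩
  left_inv g := by
    have h4 := (mem_K.mp g.2).2.2.2
    ext
    · rfl
    · rfl
    · show ((((g : kˣ × kˣ × kˣ).1 * (g : kˣ × kˣ × kˣ).2.1)⁻¹ : kˣ) : k) = ((g : kˣ × kˣ × kˣ).2.2 : k)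
      rw [inv_eq_of_mul_eq_one_right h4]
  right_inv uv := by ext <;> rfl
  map_mul' g h := by ext <;> simp [mul_mul_mul_comm]


lemma unit_zpow_eq_one {x : kˣ} {n : ℕ} (hx : x ^ n = 1) {t : ℤ} (h : (n : ℤ) ∣ t) :
    x ^ t = 1 := by
  obtain ⟨s, rfl⟩ := h
  rw [zpow_mul, zpow_natCast, hx, one_zpow]

lemma mem_K_zpow {a b c : ℕ} {w : kˣ × kˣ × kˣ} (hw : w ∈ K k a b c) (t : ℤ)
    {a' b' c' : ℕ} (hta : (a : ℤ) ∣ t * a') (htb : (b : ℤ) ∣ t * b')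
    (htc : (c : ℤ) ∣ t * c') : w ^ t ∈ K k a' b' c' := by
  obtain ⟨h1, h2, h3, h4⟩ := mem_K.mp hw
  refine mem_K.mpr ⟨?_, ?_, ?_, ?_⟩
  · show (w.1 ^ t) ^ a' = 1
    rw [← zpow_natCast, ← zpow_mul]
    exact unit_zpow_eq_one h1 hta
  · show (w.2.1 ^ t) ^ b' = 1
    rw [← zpow_natCast, ← zpow_mul]
    exact unit_zpow_eq_one h2 htb
  · show (w.2.2 ^ t) ^ c' = 1
    rw [← zpow_natCast, ← zpow_mul]
    exact unit_zpow_eq_one h3 htc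
  · show w.1 ^ t * w.2.1 ^ t * w.2.2 ^ t = 1
    rw [← mul_zpow, ← mul_zpow, h4, one_zpow]

lemma K_zpow_eq_one {a b c : ℕ} {w : kˣ × kˣ × kˣ} (hw : w ∈ K k a b c) {t : ℤ}
    (hat : (a : ℤ) ∣ t) (hbt : (b : ℤ) ∣ t) (hct : (c : ℤ) ∣ t) : w ^ t = 1 := by
  obtain ⟨h1, h2, h3, _⟩ := mem_K.mp hw
  have e1 : (w ^ t).1 = 1 := unit_zpow_eq_one h1 hat
  have e2 : (w ^ t).2.1 = 1 := unit_zpow_eq_one h2 hbt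
  have e3 : (w ^ t).2.2 = 1 := unit_zpow_eq_one h3 hct
  exact Prod.ext e1 (Prod.ext e2 e3)

lemma K_mono {a b c a' b' c' : ℕ} (hA : a' ∣ a) (hB : b' ∣ b) (hC : c' ∣ c) :
    K k a' b' c' ≤ K k a b c := by
  intro w hw
  obtain ⟨h1, h2, h3, h4⟩ := mem_K.mp hw
  refine mem_K.mpr ⟨?_, ?_, ?_, h4⟩
  · obtain ⟨s, rfl⟩ := hA; rw [pow_mul, h1, one_pow]
  · obtain ⟨s, rfl⟩ := hB; rw [pow_mul, h2, one_pow]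
  · obtain ⟨s, rfl⟩ := hC; rw [pow_mul, h3, one_pow]

/-- CRT splitting of the kernel into coprime parts. -/
lemma crt (a b c a₁ a₂ b₁ b₂ c₁ c₂ : ℕ) (ha : a = a₁ * a₂) (hb : b = b₁ * b₂)
    (hc : c = c₁ * c₂) (hcop : Nat.Coprime (a₁ * b₁ * c₁) (a₂ * b₂ * c₂)) :
    Nonempty ((K k a b c) ≃* (K k a₁ b₁ c₁) × (K k a₂ b₂ c₂)) := by
  set A := Nat.gcdA (a₁ * b₁ * c₁) (a₂ * b₂ * c₂) with hA
  set B := Nat.gcdB (a₁ * b₁ * c₁) (a₂ * b₂ * c₂) with hB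
  have hbez : ((a₁ * b₁ * c₁ : ℕ) : ℤ) * A + ((a₂ * b₂ * c₂ : ℕ) : ℤ) * B = 1 := by
    have := Nat.gcd_eq_gcd_ab (a₁ * b₁ * c₁) (a₂ * b₂ * c₂)
    rw [Nat.Coprime.gcd_eq_one hcop] at this
    exact_mod_cast this.symm
  set e : ℤ := ((a₁ * b₁ * c₁ : ℕ) : ℤ) with he
  set f : ℤ := ((a₂ * b₂ * c₂ : ℕ) : ℤ) with hf
  have hbez' : f * B + e * A = 1 := by rw [add_comm]; exact hbez
  refine ⟨{
    toFun := fun g => (⟨(g : kˣ × kˣ × kˣ) ^ (f * B),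
        mem_K_zpow g.2 _ ⟨(b₂ * c₂ : ℕ) * B, by push_cast [ha, hf]; ring⟩
          ⟨(a₂ * c₂ : ℕ) * B, by push_cast [hb, hf]; ring⟩
          ⟨(a₂ * b₂ : ℕ) * B, by push_cast [hc, hf]; ring⟩⟩,
      ⟨(g : kˣ × kˣ × kˣ) ^ (e * A),
        mem_K_zpow g.2 _ ⟨(b₁ * c₁ : ℕ) * A, by push_cast [ha, he]; ring⟩
          ⟨(a₁ * c₁ : ℕ) * A, by push_cast [hb, he]; ring⟩
          ⟨(a₁ * b₁ : ℕ) * A, by push_cast [hc, he]; ring⟩⟩)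
    invFun := fun p => ⟨(p.1 : kˣ × kˣ × kˣ) * (p.2 : kˣ × kˣ × kˣ),
      mul_mem (K_mono ⟨a₂, ha⟩ ⟨b₂, hb⟩ ⟨c₂, hc⟩ p.1.2)
        (K_mono ⟨a₁, by rw [ha, mul_comm]⟩ ⟨b₁, by rw [hb, mul_comm]⟩
          ⟨c₁, by rw [hc, mul_comm]⟩ p.2.2)⟩
    left_inv := fun g => by
      apply Subtype.ext
      show (g : kˣ × kˣ × kˣ) ^ (f * B) * (g : kˣ × kˣ × kˣ) ^ (e * A) = g
      rw [← zpow_add, hbez', zpow_one]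
    right_inv := fun p => by
      have hp1 : (p.1 : kˣ × kˣ × kˣ) ^ (e * A) = 1 :=
        K_zpow_eq_one p.1.2 ⟨(b₁ * c₁ : ℕ) * A, by push_cast [he]; ring⟩
          ⟨(a₁ * c₁ : ℕ) * A, by push_cast [he]; ring⟩
          ⟨(a₁ * b₁ : ℕ) * A, by push_cast [he]; ring⟩
      have hp2 : (p.2 : kˣ × kˣ × kˣ) ^ (f * B) = 1 :=
        K_zpow_eq_one p.2.2 ⟨(b₂ * c₂ : ℕ) * B, by push_cast [hf]; ring⟩
          ⟨(a₂ * c₂ : ℕ) * B, by push_cast [hf]; ring⟩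
          ⟨(a₂ * b₂ : ℕ) * B, by push_cast [hf]; ring⟩
      refine Prod.ext (Subtype.ext ?_) (Subtype.ext ?_)
      · show ((p.1 : kˣ × kˣ × kˣ) * (p.2 : kˣ × kˣ × kˣ)) ^ (f * B) = (p.1 : kˣ × kˣ × kˣ)
        rw [mul_zpow, hp2, mul_one, ← mul_one ((p.1 : kˣ × kˣ × kˣ) ^ (f * B)), ← hp1,
          ← zpow_add, hbez', zpow_one]
      · show ((p.1 : kˣ × kˣ × kˣ) * (p.2 : kˣ × kˣ × kˣ)) ^ (e * A) = (p.2 : kˣ × kˣ × kˣ)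
        rw [mul_zpow, hp1, one_mul, ← mul_one ((p.2 : kˣ × kˣ × kˣ) ^ (e * A)), ← hp2,
          ← zpow_add, hbez, zpow_one]
    map_mul' := fun g h => by
      refine Prod.ext (Subtype.ext ?_) (Subtype.ext ?_)
      · show ((g : kˣ × kˣ × kˣ) * h) ^ (f * B) = _ * _
        rw [mul_zpow]
      · show ((g : kˣ × kˣ × kˣ) * h) ^ (e * A) = _ * _
        rw [mul_zpow] }⟩


section Arith

/-- gcd is multiplicative across coprime pairs. -/
lemma gcd_mul_mul {x x' y y' : ℕ} (h1 : Nat.Coprime x y') (h2 : Nat.Coprime x' y) :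
    Nat.gcd (x * x') (y * y') = Nat.gcd x y * Nat.gcd x' y' := by
  apply Nat.dvd_antisymm
  · obtain ⟨u, v, hu, hv, huv⟩ := Nat.dvd_mul.mp (Nat.gcd_dvd_left (x * x') (y * y'))
    have hgy : Nat.gcd (x * x') (y * y') ∣ y * y' := Nat.gcd_dvd_right _ _
    have huy : u ∣ y * y' := (Dvd.intro v huv).trans hgy
    have hvy : v ∣ y * y' := (Dvd.intro_left u huv).trans hgy
    have hy : u ∣ y := (Nat.Coprime.coprime_dvd_left hu h1).dvd_of_dvd_mul_right huy
    have hy' : v ∣ y' := (Nat.Coprime.coprime_dvd_right hv h2.symm).symm.dvd_of_dvd_mul_left hvy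
    exact huv ▸ mul_dvd_mul (Nat.dvd_gcd hu hy) (Nat.dvd_gcd hv hy')
  · exact Nat.dvd_gcd (mul_dvd_mul (Nat.gcd_dvd_left _ _) (Nat.gcd_dvd_left _ _))
      (mul_dvd_mul (Nat.gcd_dvd_right _ _) (Nat.gcd_dvd_right _ _))

/-- `d = gcd(a,b,c)`. -/
def dd (a b c : ℕ) : ℕ := Nat.gcd a (Nat.gcd b c)

/-- `m = gcd(bc,ac,ab)`. -/
def mm (a b c : ℕ) : ℕ := Nat.gcd (b * c) (Nat.gcd (a * c) (a * b))

lemma gcd_left_comm (a b c : ℕ) : Nat.gcd a (Nat.gcd b c) = Nat.gcd b (Nat.gcd a c) := by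
  rw [← Nat.gcd_assoc, Nat.gcd_comm a b, Nat.gcd_assoc]

lemma dd_comm12 (a b c : ℕ) : dd b a c = dd a b c := by
  rw [dd, dd, gcd_left_comm]

lemma dd_comm23 (a b c : ℕ) : dd a c b = dd a b c := by
  rw [dd, dd, Nat.gcd_comm c b]

lemma mm_comm12 (a b c : ℕ) : mm b a c = mm a b c := by
  rw [mm, mm, mul_comm b a, gcd_left_comm]

lemma mm_comm23 (a b c : ℕ) : mm a c b = mm a b c := by
  rw [mm, mm, mul_comm c b, Nat.gcd_comm (a * b) (a * c)]

lemma dd_sorted {a b c : ℕ} (hab : a ∣ b) (hbc : b ∣ c) : dd a b c = a := by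
  rw [dd, Nat.gcd_eq_left hbc, Nat.gcd_eq_left hab]

lemma mm_sorted {a b c : ℕ} (hab : a ∣ b) (hbc : b ∣ c) : mm a b c = a * b := by
  have hac : a ∣ c := hab.trans hbc
  rw [mm, Nat.gcd_mul_left, Nat.gcd_eq_right hbc]
  exact Nat.gcd_eq_right (by rw [mul_comm b c]; exact mul_dvd_mul_right hac b)

lemma dd_dvd_a (a b c : ℕ) : dd a b c ∣ a := Nat.gcd_dvd_left _ _
lemma dd_dvd_b (a b c : ℕ) : dd a b c ∣ b := (Nat.gcd_dvd_right _ _).trans (Nat.gcd_dvd_left _ _)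
lemma dd_dvd_c (a b c : ℕ) : dd a b c ∣ c := (Nat.gcd_dvd_right _ _).trans (Nat.gcd_dvd_right _ _)

lemma dd_dvd_mm (a b c : ℕ) : dd a b c ∣ mm a b c :=
  Nat.dvd_gcd ((dd_dvd_b a b c).mul_right c)
    (Nat.dvd_gcd ((dd_dvd_a a b c).mul_right c) ((dd_dvd_a a b c).mul_right b))

section Mul

variable {a₁ a₂ b₁ b₂ c₁ c₂ : ℕ}

private lemma hcross (hcop : Nat.Coprime (a₁ * b₁ * c₁) (a₂ * b₂ * c₂)) :
    ∀ x y : ℕ, x ∣ a₁ * b₁ * c₁ → y ∣ a₂ * b₂ * c₂ → Nat.Coprime x y :=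
  fun _ _ hx hy => Nat.Coprime.coprime_dvd_left hx (Nat.Coprime.coprime_dvd_right hy hcop)

variable (hcop : Nat.Coprime (a₁ * b₁ * c₁) (a₂ * b₂ * c₂))
include hcop

lemma dd_mul : dd (a₁ * a₂) (b₁ * b₂) (c₁ * c₂) = dd a₁ b₁ c₁ * dd a₂ b₂ c₂ := by
  have h := hcross hcop
  rw [dd, dd, dd,
    gcd_mul_mul (h b₁ c₂ ⟨a₁ * c₁, by ring⟩ ⟨a₂ * b₂, by ring⟩)
      ((h c₁ b₂ ⟨a₁ * b₁, by ring⟩ ⟨a₂ * c₂, by ring⟩).symm),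
    gcd_mul_mul (h a₁ _ ⟨b₁ * c₁, by ring⟩ ((Nat.gcd_dvd_left b₂ c₂).trans ⟨a₂ * c₂, by ring⟩))
      ((h _ a₂ ((Nat.gcd_dvd_left b₁ c₁).trans ⟨a₁ * c₁, by ring⟩) ⟨b₂ * c₂, by ring⟩).symm)]

lemma mm_mul : mm (a₁ * a₂) (b₁ * b₂) (c₁ * c₂) = mm a₁ b₁ c₁ * mm a₂ b₂ c₂ := by
  have h := hcross hcop
  have e1 : (b₁ * b₂) * (c₁ * c₂) = (b₁ * c₁) * (b₂ * c₂) := by ring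
  have e2 : (a₁ * a₂) * (c₁ * c₂) = (a₁ * c₁) * (a₂ * c₂) := by ring
  have e3 : (a₁ * a₂) * (b₁ * b₂) = (a₁ * b₁) * (a₂ * b₂) := by ring
  rw [mm, mm, mm, e1, e2, e3,
    gcd_mul_mul (h (a₁ * c₁) (a₂ * b₂) ⟨b₁, by ring⟩ ⟨c₂, by ring⟩)
      ((h (a₁ * b₁) (a₂ * c₂) ⟨c₁, by ring⟩ ⟨b₂, by ring⟩).symm),
    gcd_mul_mul (h (b₁ * c₁) _ ⟨a₁, by ring⟩ ((Nat.gcd_dvd_left _ _).trans ⟨b₂, by ring⟩))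
      ((h _ (b₂ * c₂) ((Nat.gcd_dvd_left _ _).trans ⟨b₁, by ring⟩) ⟨a₂, by ring⟩).symm)]

end Mul

end Arith


lemma cast_ne_zero_of_dvd {s t : ℕ} (h : s ∣ t) (ht : ((t : ℕ) : k) ≠ 0) :
    ((s : ℕ) : k) ≠ 0 := by
  obtain ⟨r, rfl⟩ := h
  intro hs; apply ht; rw [Nat.cast_mul, hs, zero_mul]

section Main

variable [IsAlgClosed k]

/-- The target group. -/
abbrev Tgt (a b c : ℕ) : Type :=
  Multiplicative (ZMod (dd a b c) × ZMod (mm a b c / dd a b c))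

/-- Transport along equalities of the moduli. -/
def tgtCongr {α₁ α₂ β₁ β₂ : ℕ} (h1 : α₁ = α₂) (h2 : β₁ = β₂) :
    Multiplicative (ZMod α₁ × ZMod β₁) ≃* Multiplicative (ZMod α₂ × ZMod β₂) := by
  subst h1; subst h2; exact MulEquiv.refl _

lemma sorted_case (a b c : ℕ) (ha : 0 < a) (hab : a ∣ b) (hbc : b ∣ c)
    (hchar : ((a * b * c : ℕ) : k) ≠ 0) : Nonempty ((K k a b c) ≃* Tgt a b c) := by
  have hd : dd a b c = a := dd_sorted hab hbc
  have hm : mm a b c / dd a b c = b := by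
    rw [mm_sorted hab hbc, hd, Nat.mul_div_cancel_left b ha]
  obtain ⟨ea⟩ := muEquiv (k := k) a (cast_ne_zero_of_dvd ⟨b * c, by ring⟩ hchar)
  obtain ⟨eb⟩ := muEquiv (k := k) b (cast_ne_zero_of_dvd ⟨a * c, by ring⟩ hchar)
  exact ⟨(dvdEquiv a b c (hab.trans hbc) hbc).trans
    (((ea.prodCongr eb).trans (MulEquiv.prodMultiplicative _ _).symm).trans
      (tgtCongr hd.symm hm.symm))⟩

lemma of_swap12 (a b c : ℕ) (h : Nonempty ((K k b a c) ≃* Tgt b a c)) :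
    Nonempty ((K k a b c) ≃* Tgt a b c) :=
  ⟨(swap12 a b c).trans (h.some.trans (tgtCongr (dd_comm12 a b c)
    (by rw [dd_comm12 a b c, mm_comm12 a b c])))⟩

lemma of_swap23 (a b c : ℕ) (h : Nonempty ((K k a c b) ≃* Tgt a c b)) :
    Nonempty ((K k a b c) ≃* Tgt a b c) :=
  ⟨(swap23 a b c).trans (h.some.trans (tgtCongr (dd_comm23 a b c)
    (by rw [dd_comm23 a b c, mm_comm23 a b c])))⟩

lemma prime_pow_case (p : ℕ) (hp : p.Prime) (i j l : ℕ) (a b c : ℕ)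
    (hA : a = p ^ i) (hB : b = p ^ j) (hC : c = p ^ l)
    (hchar : ((a * b * c : ℕ) : k) ≠ 0) : Nonempty ((K k a b c) ≃* Tgt a b c) := by
  subst hA hB hC
  have pos : ∀ t : ℕ, 0 < p ^ t := fun t => pow_pos hp.pos t
  have hch : ∀ x y z : ℕ, x * y * z = p ^ i * p ^ j * p ^ l → ((x * y * z : ℕ) : k) ≠ 0 :=
    fun x y z hxyz => by rw [hxyz]; exact hchar
  have dvd : ∀ s t : ℕ, s ≤ t → p ^ s ∣ p ^ t := fun s t h => pow_dvd_pow p h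
  rcases le_total i j with hij | hji
  · rcases le_total j l with hjl | hlj
    · exact sorted_case _ _ _ (pos i) (dvd _ _ hij) (dvd _ _ hjl) (hch _ _ _ (by ring))
    · rcases le_total i l with hil | hli
      · exact of_swap23 _ _ _
          (sorted_case _ _ _ (pos i) (dvd _ _ hil) (dvd _ _ hlj) (hch _ _ _ (by ring)))
      · exact of_swap23 _ _ _ (of_swap12 _ _ _
          (sorted_case _ _ _ (pos l) (dvd _ _ hli) (dvd _ _ hij) (hch _ _ _ (by ring))))
  · rcases le_total j l with hjl | hlj
    · rcases le_total i l with hil | hli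
      · exact of_swap12 _ _ _
          (sorted_case _ _ _ (pos j) (dvd _ _ hji) (dvd _ _ hil) (hch _ _ _ (by ring)))
      · exact of_swap12 _ _ _ (of_swap23 _ _ _
          (sorted_case _ _ _ (pos j) (dvd _ _ hjl) (dvd _ _ hli) (hch _ _ _ (by ring))))
    · exact of_swap12 _ _ _ (of_swap23 _ _ _ (of_swap12 _ _ _
        (sorted_case _ _ _ (pos l) (dvd _ _ hlj) (dvd _ _ hji) (hch _ _ _ (by ring)))))


lemma main_aux : ∀ n a b c : ℕ, a * b * c = n → 0 < a → 0 < b → 0 < c →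
    ((a * b * c : ℕ) : k) ≠ 0 → Nonempty ((K k a b c) ≃* Tgt a b c) := by
  intro n
  induction n using Nat.strong_induction_on with
  | _ n ih =>
    intro a b c hn ha hb hc hchar
    by_cases h1 : a * b * c = 1
    · have hc1 : c = 1 := Nat.eq_one_of_mul_eq_one_left h1
      have hab : a * b = 1 := Nat.eq_one_of_mul_eq_one_right h1
      have hb1 : b = 1 := Nat.eq_one_of_mul_eq_one_left hab
      have ha1 : a = 1 := Nat.eq_one_of_mul_eq_one_right hab
      subst ha1 hb1 hc1
      exact sorted_case 1 1 1 one_pos dvd_rfl dvd_rfl hchar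
    · set p := (a * b * c).minFac with hp_def
      have hp : p.Prime := Nat.minFac_prime h1
      set i := a.factorization p
      set j := b.factorization p
      set l := c.factorization p
      set a₁ := p ^ i with ha₁; set a₂ := a / p ^ i with ha₂
      set b₁ := p ^ j with hb₁; set b₂ := b / p ^ j with hb₂
      set c₁ := p ^ l with hc₁; set c₂ := c / p ^ l with hc₂
      have ha12 : a = a₁ * a₂ := (Nat.ordProj_mul_ordCompl_eq_self a p).symm
      have hb12 : b = b₁ * b₂ := (Nat.ordProj_mul_ordCompl_eq_self b p).symm
      have hc12 : c = c₁ * c₂ := (Nat.ordProj_mul_ordCompl_eq_self c p).symm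
      have hpa : ¬ p ∣ a₂ := Nat.not_dvd_ordCompl hp ha.ne'
      have hpb : ¬ p ∣ b₂ := Nat.not_dvd_ordCompl hp hb.ne'
      have hpc : ¬ p ∣ c₂ := Nat.not_dvd_ordCompl hp hc.ne'
      have ha₂pos : 0 < a₂ := Nat.ordCompl_pos p ha.ne'
      have hb₂pos : 0 < b₂ := Nat.ordCompl_pos p hb.ne'
      have hc₂pos : 0 < c₂ := Nat.ordCompl_pos p hc.ne'
      have hpf : ¬ p ∣ a₂ * b₂ * c₂ := by
        intro hd
        rcases (Nat.Prime.dvd_mul hp).mp hd with hd' | hd'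
        · rcases (Nat.Prime.dvd_mul hp).mp hd' with h | h
          exacts [hpa h, hpb h]
        · exact hpc hd'
      have hcop : Nat.Coprime (a₁ * b₁ * c₁) (a₂ * b₂ * c₂) := by
        have hbase : Nat.Coprime p (a₂ * b₂ * c₂) :=
          (Nat.Prime.coprime_iff_not_dvd hp).mpr hpf
        exact Nat.Coprime.mul (Nat.Coprime.mul (hbase.pow_left i) (hbase.pow_left j))
          (hbase.pow_left l)
      -- the p-part is nontrivial
      have hpn : p ∣ a * b * c := Nat.minFac_dvd _
      have he2 : 1 < a₁ * b₁ * c₁ := by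
        rcases (Nat.Prime.dvd_mul hp).mp hpn with hd' | hd'
        · rcases (Nat.Prime.dvd_mul hp).mp hd' with h | h
          · have : 1 ≤ i := (Nat.Prime.pow_dvd_iff_le_factorization hp ha.ne').mp
              (by simpa using h)
            calc 1 < p ^ i := Nat.one_lt_pow (by omega) hp.one_lt
            _ ≤ a₁ * (b₁ * c₁) := Nat.le_mul_of_pos_right _
                (Nat.mul_pos (pow_pos hp.pos j) (pow_pos hp.pos l))
            _ = a₁ * b₁ * c₁ := (mul_assoc _ _ _).symm
          · have : 1 ≤ j := (Nat.Prime.pow_dvd_iff_le_factorization hp hb.ne').mp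
              (by simpa using h)
            calc 1 < p ^ j := Nat.one_lt_pow (by omega) hp.one_lt
            _ ≤ b₁ * (a₁ * c₁) := Nat.le_mul_of_pos_right _
                (Nat.mul_pos (pow_pos hp.pos i) (pow_pos hp.pos l))
            _ = a₁ * b₁ * c₁ := by ring
        · have : 1 ≤ l := (Nat.Prime.pow_dvd_iff_le_factorization hp hc.ne').mp
              (by simpa using hd')
          calc 1 < p ^ l := Nat.one_lt_pow (by omega) hp.one_lt
          _ ≤ c₁ * (a₁ * b₁) := Nat.le_mul_of_pos_right _
              (Nat.mul_pos (pow_pos hp.pos i) (pow_pos hp.pos j))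
          _ = a₁ * b₁ * c₁ := by ring
      have hsplit : a * b * c = (a₁ * b₁ * c₁) * (a₂ * b₂ * c₂) := by
        rw [ha12, hb12, hc12]; ring
      have hfpos : 0 < a₂ * b₂ * c₂ := Nat.mul_pos (Nat.mul_pos ha₂pos hb₂pos) hc₂pos
      have hlt : a₂ * b₂ * c₂ < n := by
        rw [← hn, hsplit]
        exact (Nat.lt_mul_iff_one_lt_left hfpos).mpr he2
      -- char conditions
      have hchar1 : ((a₁ * b₁ * c₁ : ℕ) : k) ≠ 0 :=
        cast_ne_zero_of_dvd ⟨a₂ * b₂ * c₂, hsplit⟩ hchar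
      have hchar2 : ((a₂ * b₂ * c₂ : ℕ) : k) ≠ 0 :=
        cast_ne_zero_of_dvd ⟨a₁ * b₁ * c₁, by rw [hsplit]; ring⟩ hchar
      obtain ⟨e0⟩ := crt (k := k) a b c a₁ a₂ b₁ b₂ c₁ c₂ ha12 hb12 hc12 hcop
      obtain ⟨e1⟩ := prime_pow_case p hp i j l a₁ b₁ c₁ rfl rfl rfl hchar1
      obtain ⟨e2⟩ := ih (a₂ * b₂ * c₂) hlt a₂ b₂ c₂ rfl ha₂pos hb₂pos hc₂pos hchar2
      -- numerical recombination
      have hd : dd a b c = dd a₁ b₁ c₁ * dd a₂ b₂ c₂ := by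
        rw [ha12, hb12, hc12]; exact dd_mul hcop
      have hcopd : Nat.Coprime (dd a₁ b₁ c₁) (dd a₂ b₂ c₂) :=
        hcross hcop _ _ ((dd_dvd_a _ _ _).trans ⟨b₁ * c₁, by ring⟩)
          ((dd_dvd_a _ _ _).trans ⟨b₂ * c₂, by ring⟩)
      have hcopm : Nat.Coprime (mm a₁ b₁ c₁ / dd a₁ b₁ c₁) (mm a₂ b₂ c₂ / dd a₂ b₂ c₂) :=
        hcross hcop _ _
          ((Nat.div_dvd_of_dvd (dd_dvd_mm _ _ _)).trans
            ((Nat.gcd_dvd_left _ _).trans ⟨a₁, by ring⟩))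
          ((Nat.div_dvd_of_dvd (dd_dvd_mm _ _ _)).trans
            ((Nat.gcd_dvd_left _ _).trans ⟨a₂, by ring⟩))
      have hm : mm a b c / dd a b c =
          (mm a₁ b₁ c₁ / dd a₁ b₁ c₁) * (mm a₂ b₂ c₂ / dd a₂ b₂ c₂) := by
        rw [ha12, hb12, hc12, mm_mul hcop, dd_mul hcop]
        exact (Nat.div_mul_div_comm (dd_dvd_mm _ _ _) (dd_dvd_mm _ _ _)).symm
      -- assemble
      refine ⟨e0.trans ((e1.prodCongr e2).trans ?_)⟩
      refine (((MulEquiv.prodMultiplicative _ _).prodCongr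
        (MulEquiv.prodMultiplicative _ _)).trans ((MulEquiv.prodProdProdComm _ _ _ _).trans
        (((MulEquiv.prodMultiplicative _ _).symm.prodCongr
          (MulEquiv.prodMultiplicative _ _).symm).trans ?_))).trans
        (tgtCongr hd.symm hm.symm)
      refine ((AddEquiv.toMultiplicative
        ((ZMod.chineseRemainder hcopd).symm.toAddEquiv)).prodCongr
        (AddEquiv.toMultiplicative ((ZMod.chineseRemainder hcopm).symm.toAddEquiv))).trans
        (MulEquiv.prodMultiplicative _ _).symm

end Main

end KernelMu

/-- Over an algebraically closed field of characteristic coprime to `abc`, the kernel `K`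
of the multiplication map `μ_a × μ_b × μ_c → μ_{lcm(a,b,c)}`, `(ξ₀,ξ₁,ξ∞) ↦ ξ₀ξ₁ξ∞`, is
isomorphic to `ℤ/d × ℤ/(m/d)`, where `d = gcd(a,b,c)` and `m = gcd(bc,ac,ab)`. -/
theorem kernel_of_mu_product (k : Type*) [Field k] [IsAlgClosed k]
    (a b c : ℕ) (ha : 0 < a) (hb : 0 < b) (hc : 0 < c)
    (hchar : ((a * b * c : ℕ) : k) ≠ 0) :
    Nonempty
      ((((mu k a).prod ((mu k b).prod (mu k c))) ⊓ (tripleProdHom kˣ).ker :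
          Subgroup (kˣ × kˣ × kˣ)) ≃*
        Multiplicative (ZMod (Nat.gcd a (Nat.gcd b c)) ×
          ZMod (Nat.gcd (b * c) (Nat.gcd (a * c) (a * b)) / Nat.gcd a (Nat.gcd b c)))) := by
  exact KernelMu.main_aux (a * b * c) a b c rfl ha hb hc hchar
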